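/- Let X be a locally convex topological vector space and let Ω ⊆ X be a nonempty, closed, convex set with 0 ∈ Ω \ iri(Ω). If iri(Ω) ≠ ∅, then cl(aff Ω) is a closed linear subspace of X and there exists a sequence (x_k) with x_k ∈ −Ω, x_k ∉ Ω for every k, and x_k → 0 as k → ∞. -/

import Mathlib

open Set Pointwise Filter Topology

/-- The cone generated by a set `A`: `{t • a | t ≥ 0, a ∈ A}`. -/
def coneGen {X : Type*} [AddCommGroup X] [Module ℝ X] (A : Set X) : Set X :=
  {y | ∃ t : ℝ, 0 ≤ t ∧ ∃ a ∈ A, y = t • a}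

/-- A set is a linear subspace if it is the carrier of a submodule. -/
def IsLinSubspace {X : Type*} [AddCommGroup X] [Module ℝ X] (s : Set X) : Prop :=
  ∃ L : Submodule ℝ X, (L : Set X) = s

/-- Intrinsic relative interior. -/
def iri {X : Type*} [AddCommGroup X] [Module ℝ X] (Ω : Set X) : Set X :=
  {x ∈ Ω | IsLinSubspace (coneGen ((fun y => y - x) '' Ω))}

/-- Quasi-relative interior. -/
def qri {X : Type*} [AddCommGroup X] [Module ℝ X] [TopologicalSpace X] (Ω : Set X) : Set X :=
  {x ∈ Ω | IsLinSubspace (closure (coneGen ((fun y => y - x) '' Ω)))}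

/-- Relative interior in a topological vector space. -/
def ri {X : Type*} [AddCommGroup X] [Module ℝ X] [TopologicalSpace X] (Ω : Set X) : Set X :=
  {x ∈ Ω | ∃ V ∈ nhds x, V ∩ closure ((affineSpan ℝ Ω : Set X)) ⊆ Ω}

/-- Normal cone (functional-analytic version), a subset of the topological dual. -/
def normalCone {X : Type*} [AddCommGroup X] [Module ℝ X] [TopologicalSpace X]
    (Ω : Set X) (xb : X) : Set (X →L[ℝ] ℝ) :=
  {f | ∀ x ∈ Ω, f (x - xb) ≤ 0}

/-- if `Ω` is a nonempty closed convex set in an LCTV space with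
`0 ∈ Ω \ iri Ω` and `iri Ω ≠ ∅`, then `cl(aff Ω)` is a closed linear subspace and
there is a sequence in `−Ω`, outside of `Ω`, converging to `0`. -/
theorem claff_subspace_and_sequence {X : Type*} [AddCommGroup X] [Module ℝ X]
    [TopologicalSpace X] [IsTopologicalAddGroup X] [ContinuousSMul ℝ X]
    [LocallyConvexSpace ℝ X]
    (Ω : Set X) (hne : Ω.Nonempty) (hcl : IsClosed Ω) (hconv : Convex ℝ Ω)
    (h0 : (0 : X) ∈ Ω \ iri Ω) (hiri : (iri Ω).Nonempty) :
    (IsLinSubspace (closure ((affineSpan ℝ Ω : Set X))) ∧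
      IsClosed (closure ((affineSpan ℝ Ω : Set X)))) ∧
    ∃ x : ℕ → X, (∀ k, x k ∈ -Ω ∧ x k ∉ Ω) ∧ Filter.Tendsto x Filter.atTop (nhds 0) := by
  obtain ⟨h0Ω, h0ni⟩ := h0
  have haff : (affineSpan ℝ Ω : Set X) = (Submodule.span ℝ Ω : Set X) := by
    rw [← affineSpan_insert_zero, Set.insert_eq_self.2 h0Ω]
  constructor
  · constructor
    · refine ⟨(Submodule.span ℝ Ω).topologicalClosure, ?_⟩
      rw [haff]; rfl
    · exact isClosed_closure
  -- second part
  obtain ⟨xb, hxbΩ, L, hL⟩ := hiri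
  -- cone Ω basic closure properties
  have hmem : ∀ {s : ℝ} {z : X}, 0 ≤ s → z ∈ Ω → s • z ∈ coneGen Ω :=
    fun hs hz => ⟨_, hs, _, hz, rfl⟩
  have hsmul : ∀ {c : ℝ} {v : X}, 0 ≤ c → v ∈ coneGen Ω → c • v ∈ coneGen Ω := by
    rintro c v hc ⟨t, ht, a, ha, rfl⟩
    exact ⟨c * t, mul_nonneg hc ht, a, ha, (mul_smul c t a).symm⟩
  have hadd : ∀ {v w : X}, v ∈ coneGen Ω → w ∈ coneGen Ω → v + w ∈ coneGen Ω := by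
    rintro v w ⟨s, hs, z, hz, rfl⟩ ⟨r, hr, u, hu, rfl⟩
    rcases eq_or_lt_of_le (add_nonneg hs hr) with h | h
    · have hs0 : s = 0 := le_antisymm (by linarith) hs
      have hr0 : r = 0 := le_antisymm (by linarith) hr
      subst hs0; subst hr0
      simpa using hmem le_rfl h0Ω
    · refine ⟨s + r, le_of_lt h, (s / (s + r)) • z + (r / (s + r)) • u,
        hconv hz hu (div_nonneg hs h.le) (div_nonneg hr h.le) (by field_simp), ?_⟩
      rw [smul_add, smul_smul, smul_smul]
      rw [mul_div_cancel₀ _ (ne_of_gt h), mul_div_cancel₀ _ (ne_of_gt h)]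
  -- key: -t • xb ∉ Ω for all t > 0
  have hkey : ∀ t : ℝ, 0 < t → (-t) • xb ∉ Ω := by
    intro t ht hmemΩ
    apply h0ni
    refine ⟨h0Ω, ?_⟩
    have himg : (fun y => y - (0:X)) '' Ω = Ω := by simp
    rw [himg]
    -- neg closure: for each a ∈ Ω, -a ∈ coneGen Ω
    have hnegxb : -xb ∈ coneGen Ω := by
      have : -xb = t⁻¹ • ((-t) • xb) := by
        rw [smul_smul]; field_simp; simp
      rw [this]
      exact hmem (inv_nonneg.2 ht.le) hmemΩ
    have hneg : ∀ a ∈ Ω, -a ∈ coneGen Ω := by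
      intro a ha
      have h1 : a - xb ∈ (L : Set X) := by
        rw [hL]; exact ⟨1, zero_le_one, a - xb, ⟨a, ha, rfl⟩, (one_smul ℝ _).symm⟩
      have h2 : -(a - xb) ∈ (L : Set X) := L.neg_mem h1
      rw [hL] at h2
      obtain ⟨s, hs, _, ⟨z, hz, rfl⟩, heq⟩ := h2
      simp only at heq
      have : -a = s • z + (1 + s) • (-xb) := by
        linear_combination (norm := module) heq
      rw [this]
      exact hadd (hmem hs hz) (hsmul (by linarith) hnegxb)
    refine ⟨{ carrier := coneGen Ω
              add_mem' := fun hv hw => hadd hv hw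
              zero_mem' := by simpa using hmem le_rfl h0Ω
              smul_mem' := ?_ }, rfl⟩
    rintro c v hv
    rcases le_or_gt 0 c with hc | hc
    · exact hsmul hc hv
    · obtain ⟨t', ht', a, ha, rfl⟩ := hv
      have : c • t' • a = ((-c) * t') • (-a) := by module
      rw [this]
      exact hsmul (mul_nonneg (by linarith) ht') (hneg a ha)
  -- the sequence
  refine ⟨fun k => (-(1 / (k + 1 : ℝ))) • xb, fun k => ?_, ?_⟩
  · have hk : (0 : ℝ) < 1 / (k + 1 : ℝ) := by positivity
    constructor
    · rw [Set.mem_neg]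
      have : -((-(1 / (k + 1 : ℝ))) • xb) = (1 / (k + 1 : ℝ)) • xb + (1 - 1 / (k + 1 : ℝ)) • 0 := by
        simp
      rw [this]
      refine hconv hxbΩ h0Ω hk.le ?_ (by ring)
      have : 1 / (k + 1 : ℝ) ≤ 1 := by
        rw [div_le_one (by positivity)]; linarith
      linarith
    · exact hkey _ hk
  · have h1 : Filter.Tendsto (fun k : ℕ => -(1 / (k + 1 : ℝ))) Filter.atTop (nhds 0) := by
      rw [show (0:ℝ) = -0 by ring]
      exact (tendsto_one_div_add_atTop_nhds_zero_nat).neg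
    have := h1.smul_const xb
    simpa using this
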